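/- arXiv:2403.15960 — 4 statements merged into one kernel-verified Lean document; each statement's English description precedes it below -/
import Mathlib

section
/- Let d ≥ 1 and let V be a ℚ-vector space of dimension 12d−2 equipped with а nondegenerate symmetric bilinear form of signature (2d−1, 10d−1). Then for every unipotent isometry U of V, the fixed subspace {v ∈ V : U(v) = v} has dimension at least 4d+2. -/
open TensorProduct

section Aux

private lemma finrank_map_add_finrank_inf_ker
    {K V : Type*} [Field K] [AddCommGroup V] [Module K V] [FiniteDimensional K V]
    (f : V →ₗ[K] V) (p : Submodule K V) :
    Module.finrank K (p.map f) + Module.finrank K ↥(p ⊓ LinearMap.ker f)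
      = Module.finrank K p := by
  have h := LinearMap.finrank_range_add_finrank_ker (f.domRestrict p)
  rw [LinearMap.range_domRestrict, LinearMap.ker_domRestrict] at h
  rw [← h]
  congr 1
  rw [← Submodule.finrank_map_subtype_eq p ((LinearMap.ker f).comap p.subtype),
    Submodule.map_comap_subtype]

end Aux

/-- A subspace of a real quadratic space on which the form is positive definite. -/
def PosDefOn {V : Type*} [AddCommGroup V] [Module ℝ V]
    (B : LinearMap.BilinForm ℝ V) (W : Submodule ℝ V) : Prop :=
  ∀ w ∈ W, w ≠ 0 → 0 < B w w

/-- A subspace of a real quadratic space on which the form is negative definite. -/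
def NegDefOn {V : Type*} [AddCommGroup V] [Module ℝ V]
    (B : LinearMap.BilinForm ℝ V) (W : Submodule ℝ V) : Prop :=
  ∀ w ∈ W, w ≠ 0 → B w w < 0

/-- A rational quadratic space `(V, B)` has signature `(p, q)`: the real quadratic space
`ℝ ⊗ V` has a maximal positive-definite subspace of dimension `p` and a maximal
negative-definite subspace of dimension `q`. -/
def HasSignatureQ {V : Type*} [AddCommGroup V] [Module ℚ V]
    (B : LinearMap.BilinForm ℚ V) (p q : ℕ) : Prop :=
  (∃ W : Submodule ℝ (ℝ ⊗[ℚ] V),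
      PosDefOn (LinearMap.BilinForm.baseChange ℝ B) W ∧ Module.finrank ℝ W = p) ∧
  (∀ W : Submodule ℝ (ℝ ⊗[ℚ] V),
      PosDefOn (LinearMap.BilinForm.baseChange ℝ B) W → Module.finrank ℝ W ≤ p) ∧
  (∃ W : Submodule ℝ (ℝ ⊗[ℚ] V),
      NegDefOn (LinearMap.BilinForm.baseChange ℝ B) W ∧ Module.finrank ℝ W = q) ∧
  (∀ W : Submodule ℝ (ℝ ⊗[ℚ] V),
      NegDefOn (LinearMap.BilinForm.baseChange ℝ B) W → Module.finrank ℝ W ≤ q)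

/-- For a nondegenerate symmetric bilinear form of signature
`(2d-1, 10d-1)` on a `ℚ`-vector space of dimension `12d-2`, the fixed subspace of any
unipotent isometry has dimension at least `4d+2`. -/
theorem unipotent_fixed_space_dim_ge
    (d : ℕ) (hd : 1 ≤ d)
    (V : Type*) [AddCommGroup V] [Module ℚ V] [FiniteDimensional ℚ V]
    (hdim : Module.finrank ℚ V = 12 * d - 2)
    (B : LinearMap.BilinForm ℚ V)
    (hsymm : ∀ x y : V, B x y = B y x)
    (hnondeg : ∀ v : V, (∀ w : V, B v w = 0) → v = 0)
    (hsig : HasSignatureQ B (2 * d - 1) (10 * d - 1))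
    (U : V ≃ₗ[ℚ] V)
    (hisom : ∀ x y : V, B (U x) (U y) = B x y)
    (hunip : IsNilpotent ((U : V →ₗ[ℚ] V) - LinearMap.id : Module.End ℚ V)) :
    4 * d + 2 ≤
      Module.finrank ℚ (LinearMap.ker ((U : V →ₗ[ℚ] V) - LinearMap.id)) := by
  classical
  set N : Module.End ℚ V := (U : V →ₗ[ℚ] V) - LinearMap.id with hN
  set Us : Module.End ℚ V := (U.symm : V →ₗ[ℚ] V) with hUs
  set P : Module.End ℚ V := N * Us with hP
  -- basic pointwise facts
  have hNapp : ∀ x : V, N x = U x - x := by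
    intro x; simp [hN, LinearMap.sub_apply]
  have hUsapp : ∀ x : V, Us x = U.symm x := fun x => rfl
  -- commutation
  have hc : Commute N Us := by
    apply LinearMap.ext
    intro z
    simp only [Module.End.mul_apply, hNapp, hUsapp, map_sub]
    simp
  -- one-step adjoint identity
  have hstep : ∀ x z : V, B (N x) z = - B x (P z) := by
    intro x z
    have h1 : B (U x) z = B x (U.symm z) := by
      conv_lhs => rw [show z = U (U.symm z) by simp]
      exact hisom x (U.symm z)
    have h2 : P z = z - U.symm z := by
      simp [hP, Module.End.mul_apply, hUsapp, hNapp]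
    rw [hNapp, h2]
    simp only [map_sub, LinearMap.sub_apply, h1]
    ring
  -- iterated adjoint identity
  have hiter : ∀ (k : ℕ) (x z : V), B ((N ^ k) x) z = (-1 : ℚ) ^ k * B x ((P ^ k) z) := by
    intro k
    induction k with
    | zero => intro x z; simp
    | succ k ih =>
      intro x z
      have : (N ^ (k + 1)) x = (N ^ k) (N x) := by
        rw [pow_succ]; rfl
      rw [this, ih (N x) z, hstep x ((P ^ k) z)]
      have : (P ^ (k + 1)) z = P ((P ^ k) z) := by
        rw [pow_succ']; rfl
      rw [this]
      ring
  -- key isotropy computation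
  have hiso : ∀ (k l : ℕ) (x y : V), l ≤ k → (N ^ (2 * l)) y = 0 →
      B ((N ^ k) x) ((N ^ l) y) = 0 := by
    intro k l x y hlk hy
    rw [hiter k x ((N ^ l) y)]
    have hPk : P ^ k = Us ^ k * N ^ k := by
      rw [hP, hc.mul_pow, (hc.pow_pow k k).eq]
    have : (P ^ k) ((N ^ l) y) = (Us ^ k) ((N ^ (k + l)) y) := by
      rw [hPk]
      have : (N ^ k) ((N ^ l) y) = (N ^ (k + l)) y := by
        rw [pow_add]; rfl
      simp [Module.End.mul_apply, this]
    rw [this]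
    have : (N ^ (k + l)) y = 0 := by
      rw [show k + l = (k - l) + 2 * l by omega, pow_add, Module.End.mul_apply, hy, map_zero]
    rw [this, map_zero, map_zero, mul_zero]
  -- the isotropic subspace T
  set Tk : ℕ → Submodule ℚ V := fun k => (LinearMap.ker (N ^ (2 * k))).map (N ^ k) with hTk
  set T : Submodule ℚ V := ⨆ k, Tk k with hT
  have hTkle : ∀ k, Tk k ≤ T := fun k => le_iSup Tk k
  -- isotropy on generators
  have hgen : ∀ (k l : ℕ), ∀ u ∈ Tk k, ∀ v ∈ Tk l, B u v = 0 := by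
    intro k l u hu v hv
    obtain ⟨x, hx, rfl⟩ := hu
    obtain ⟨y, hy, rfl⟩ := hv
    simp only [SetLike.mem_coe, LinearMap.mem_ker] at hx hy
    rcases le_or_gt l k with h | h
    · exact hiso k l x y h hy
    · rw [hsymm]
      exact hiso l k y x h.le hx
  -- isotropy on T
  have hTT : ∀ u ∈ T, ∀ v ∈ T, B u v = 0 := by
    have h2 : ∀ (k : ℕ), ∀ u ∈ Tk k, ∀ v ∈ T, B u v = 0 := by
      intro k u hu v hv
      have : T ≤ LinearMap.ker (B u) := by
        rw [hT]
        apply iSup_le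
        intro l w hw
        rw [LinearMap.mem_ker]
        exact hgen k l u hu w hw
      exact this hv
    intro u hu v hv
    have : T ≤ LinearMap.ker (B.flip v) := by
      rw [hT]
      apply iSup_le
      intro k w hw
      rw [LinearMap.mem_ker]
      exact h2 k w hw v hv
    exact this hu
  -- nilpotency exponent
  obtain ⟨r₀, hr₀⟩ := hunip
  set r : ℕ := r₀ + 1 with hrdef
  have hr : N ^ r = 0 := by rw [hrdef, pow_succ, hr₀, zero_mul]
  have hrm : ∀ m, r ≤ m → N ^ m = 0 := by
    intro m hm
    rw [show m = r + (m - r) by omega, pow_add, hr, zero_mul]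
  -- dimension bookkeeping
  set κ : ℕ → ℕ := fun j => Module.finrank ℚ (LinearMap.ker (N ^ j)) with hκ
  set Kj : ℕ → Submodule ℚ V := fun j => (LinearMap.ker (N ^ (j+1))).map (N ^ j) with hKj
  set ε : ℕ → ℕ := fun j => Module.finrank ℚ (Kj j) with hε
  have hkerle : ∀ j, LinearMap.ker (N ^ j) ≤ LinearMap.ker (N ^ (j+1)) := by
    intro j x hx
    rw [LinearMap.mem_ker] at hx ⊢
    rw [pow_succ', Module.End.mul_apply, hx, map_zero]
  have hκε : ∀ j, κ (j+1) = ε j + κ j := by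
    intro j
    have h := finrank_map_add_finrank_inf_ker (N ^ j) (LinearMap.ker (N ^ (j+1)))
    rw [inf_eq_right.mpr (hkerle j)] at h
    exact h.symm
  have htel : ∀ m, κ (m+1) = κ 1 + ∑ j ∈ Finset.range m, ε (j+1) := by
    intro m
    induction m with
    | zero => simp
    | succ m ih =>
      rw [Finset.sum_range_succ, hκε (m+1), ih]
      ring
  have hmono : ∀ j, ε (j+1) ≤ ε j := by
    intro j
    apply Submodule.finrank_mono
    rintro _ ⟨x, hx, rfl⟩
    rw [SetLike.mem_coe, LinearMap.mem_ker] at hx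
    refine ⟨N x, ?_, ?_⟩
    · rw [SetLike.mem_coe, LinearMap.mem_ker, ← Module.End.mul_apply, ← pow_succ]
      exact hx
    · rw [← Module.End.mul_apply, ← pow_succ]
  -- the filtration of T
  set S : ℕ → Submodule ℚ V := fun k => T ⊓ LinearMap.ker (N ^ k) with hS
  have hstep2 : ∀ k, ε (2*k+1) + Module.finrank ℚ (S k) ≤ Module.finrank ℚ (S (k+1)) := by
    intro k
    have h := finrank_map_add_finrank_inf_ker (N ^ k) (S (k+1))
    have h1 : S (k+1) ⊓ LinearMap.ker (N ^ k) = S k := by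
      rw [hS]
      simp only
      rw [inf_assoc, inf_eq_right.mpr (hkerle k)]
    have h2 : Kj (2*k+1) ≤ (S (k+1)).map (N ^ k) := by
      rintro _ ⟨x, hx, rfl⟩
      rw [SetLike.mem_coe, LinearMap.mem_ker] at hx
      have hx' : (N ^ (2 * (k+1))) x = 0 := by
        rw [show 2*(k+1) = 2*k+1+1 by ring]
        exact hx
      refine ⟨(N ^ (k+1)) x, Submodule.mem_inf.mpr ⟨?_, ?_⟩, ?_⟩
      · exact hTkle (k+1) ⟨x, LinearMap.mem_ker.mpr hx', rfl⟩
      · rw [LinearMap.mem_ker, ← Module.End.mul_apply, ← pow_add]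
        rw [show k+1+(k+1) = 2*k+1+1 by ring]
        exact hx
      · rw [← Module.End.mul_apply, ← pow_add, show k + (k+1) = 2*k+1 by ring]
    have h3 : ε (2*k+1) ≤ Module.finrank ℚ ((S (k+1)).map (N ^ k)) :=
      Submodule.finrank_mono h2
    rw [h1] at h
    omega
  have hSsum : ∀ m, ∑ k ∈ Finset.range m, ε (2*k+1) ≤ Module.finrank ℚ (S m) := by
    intro m
    induction m with
    | zero => simp
    | succ m ih =>
      rw [Finset.sum_range_succ]
      have := hstep2 m
      omega
  have hST : S r = T := by
    rw [hS]
    simp only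
    rw [hr, LinearMap.ker_zero, inf_top_eq]
  set t : ℕ := Module.finrank ℚ T with ht
  have hTsum : ∑ k ∈ Finset.range r, ε (2*k+1) ≤ t := by
    have := hSsum r
    rw [hST] at this
    exact this
  have hpair : ∀ m, ∑ j ∈ Finset.range (2*m), ε (j+1) ≤ 2 * ∑ k ∈ Finset.range m, ε (2*k+1) := by
    intro m
    induction m with
    | zero => simp
    | succ m ih =>
      rw [show 2*(m+1) = (2*m+1)+1 by ring, Finset.sum_range_succ, Finset.sum_range_succ,
        Finset.sum_range_succ (f := fun k => ε (2*k+1))]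
      have h1 := hmono (2*m+1)
      have h2 : 2*m+1+1 = 2*(m+1) := by ring
      omega
  have htot : Module.finrank ℚ V = κ 1 + ∑ j ∈ Finset.range (2*r), ε (j+1) := by
    have h := htel (2*r)
    have hk : κ (2*r+1) = Module.finrank ℚ V := by
      rw [hκ]
      simp only
      rw [hrm (2*r+1) (by omega), LinearMap.ker_zero]
      exact finrank_top ℚ V
    omega
  -- Base change: bound t using the negative definite subspace
  obtain ⟨-, -, ⟨W, hWneg, hWrank⟩, -⟩ := hsig
  set B' : LinearMap.BilinForm ℝ (ℝ ⊗[ℚ] V) := LinearMap.BilinForm.baseChange ℝ B with hB'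
  have hstepA : ∀ x ∈ T, ∀ v ∈ T.baseChange ℝ, B' ((1:ℝ) ⊗ₜ[ℚ] x) v = 0 := by
    intro x hx v hv
    have hle : T.baseChange ℝ ≤ LinearMap.ker (B' ((1:ℝ) ⊗ₜ[ℚ] x)) := by
      rw [Submodule.baseChange_eq_span, Submodule.span_le]
      rintro _ ⟨y, hy, rfl⟩
      rw [SetLike.mem_coe, LinearMap.mem_ker]
      show B' ((1:ℝ) ⊗ₜ[ℚ] x) ((1:ℝ) ⊗ₜ[ℚ] y) = 0
      rw [hB', LinearMap.BilinForm.baseChange_tmul, hTT x hx y hy, zero_smul]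
    exact hle hv
  have hvan : ∀ u ∈ T.baseChange ℝ, ∀ v ∈ T.baseChange ℝ, B' u v = 0 := by
    intro u hu v hv
    have hle : T.baseChange ℝ ≤ LinearMap.ker (B'.flip v) := by
      rw [Submodule.baseChange_eq_span, Submodule.span_le]
      rintro _ ⟨y, hy, rfl⟩
      rw [SetLike.mem_coe, LinearMap.mem_ker]
      show B' ((1:ℝ) ⊗ₜ[ℚ] y) v = 0
      exact hstepA y hy v hv
    exact hle hu
  let b : Module.Basis (Fin t) ℚ T := Module.finBasis ℚ T
  let ι : (ℝ ⊗[ℚ] T) →ₗ[ℝ] (ℝ ⊗[ℚ] V) := (T.subtype).baseChange ℝ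
  have hιinj : Function.Injective ι := by
    have h := Module.Flat.lTensor_preserves_injective_linearMap (M := ℝ)
      T.subtype T.injective_subtype
    rw [← LinearMap.baseChange_eq_ltensor] at h
    exact h
  let c : Module.Basis (Fin t) ℝ (ℝ ⊗[ℚ] T) := Algebra.TensorProduct.basis ℝ b
  have hli : LinearIndependent ℝ (fun i => ι (c i)) :=
    c.linearIndependent.map' ι (LinearMap.ker_eq_bot.mpr hιinj)
  set T' : Submodule ℝ (ℝ ⊗[ℚ] V) := Submodule.span ℝ (Set.range fun i => ι (c i)) with hT'
  have hT'rank : Module.finrank ℝ T' = t := by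
    rw [hT', finrank_span_eq_card hli, Fintype.card_fin]
  have happ : ∀ i, ι (c i) = (1:ℝ) ⊗ₜ[ℚ] ((b i : V)) := by
    intro i
    have h1 : c i = (1:ℝ) ⊗ₜ[ℚ] (b i) := Algebra.TensorProduct.basis_apply b i
    rw [h1]
    exact T.subtype.baseChange_tmul 1 (b i)
  have hT'le : T' ≤ T.baseChange ℝ := by
    rw [hT', Submodule.span_le]
    rintro _ ⟨i, rfl⟩
    show ι (c i) ∈ _
    rw [happ i]
    exact Submodule.tmul_mem_baseChange_of_mem 1 (b i).2
  have hdisj : Disjoint T' W := by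
    rw [Submodule.disjoint_def]
    intro x hxT hxW
    by_contra hx0
    have hneg := hWneg x hxW hx0
    have h0 := hvan x (hT'le hxT) x (hT'le hxT)
    rw [h0] at hneg
    exact lt_irrefl 0 hneg
  have hle2 := Submodule.finrank_add_finrank_le_of_disjoint hdisj
  rw [hWrank, hT'rank, Module.finrank_baseChange, hdim] at hle2
  -- conclude
  have hκ1 : κ 1 = Module.finrank ℚ (LinearMap.ker N) := by
    rw [hκ]
    simp only
    rw [pow_one]
  have hfinal := hpair r
  rw [hdim] at htot
  show 4 * d + 2 ≤ Module.finrank ℚ (LinearMap.ker N)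
  omega
end

section
/- Let V be a finite-dimensional ℚ-vector space with a nondegenerate symmetric bilinear form B, and let U be a unipotent isometry of (V,B). If the restriction of B to the fixed subspace Fix(U) = {v ∈ V : U(v) = v} is positive definite or negative definite, then U is the identity. -/
/-- If the restriction of a nondegenerate symmetric bilinear form on a
finite-dimensional `ℚ`-vector space to the fixed subspace of a unipotent isometry `U` is
positive definite or negative definite, then `U` is the identity. -/
theorem unipotent_definite_fixed_space_eq_id
    (V : Type*) [AddCommGroup V] [Module ℚ V] [FiniteDimensional ℚ V]
    (B : LinearMap.BilinForm ℚ V)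
    (hsymm : ∀ x y : V, B x y = B y x)
    (hnondeg : ∀ v : V, (∀ w : V, B v w = 0) → v = 0)
    (U : V ≃ₗ[ℚ] V)
    (hisom : ∀ x y : V, B (U x) (U y) = B x y)
    (hunip : IsNilpotent ((U : V →ₗ[ℚ] V) - LinearMap.id : Module.End ℚ V))
    (hdef : (∀ v ∈ LinearMap.ker ((U : V →ₗ[ℚ] V) - LinearMap.id), v ≠ 0 → 0 < B v v) ∨
            (∀ v ∈ LinearMap.ker ((U : V →ₗ[ℚ] V) - LinearMap.id), v ≠ 0 → B v v < 0)) :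
    U = LinearEquiv.refl ℚ V := by
  classical
  set f : Module.End ℚ V := (U : V →ₗ[ℚ] V) with hf
  set g : Module.End ℚ V := (U.symm : V →ₗ[ℚ] V) with hg
  have hgf : ∀ v, g (f v) = v := by intro v; simp [hf, hg]
  have hfg : ∀ v, f (g v) = v := by intro v; simp [hf, hg]
  set N : Module.End ℚ V := f - LinearMap.id with hNdef
  have hNv : ∀ v, N v = f v - v := by intro v; simp [hNdef]
  have hcomm : ∀ v, N (g v) = g (N v) := by
    intro v
    simp only [hNv, map_sub]
    rw [show f (g v) = v from hfg v]
    congr 1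
    conv_lhs => rw [← hgf v]
  have key : ∀ x y : V, B (N x) y = -(B x (g (N y))) := by
    intro x y
    have h1 : B (f x) y = B x (g y) := by
      have := hisom x (U.symm y)
      simpa [hf, hg] using this
    have h2 : g (N y) = g (f y) - g y := by rw [hNv]; exact map_sub g _ _
    rw [hNv, h2, map_sub, LinearMap.sub_apply, h1, hgf, map_sub]
    ring
  have hNgm : ∀ (m : ℕ) (w : V), N ((g ^ m) w) = (g ^ m) (N w) := by
    intro m
    induction m with
    | zero => intro w; simp
    | succ m ih =>
      intro w
      rw [pow_succ, Module.End.mul_apply, ih, hcomm, Module.End.mul_apply]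
  have keym : ∀ (m : ℕ) (x y : V), B ((N ^ m) x) y = (-1 : ℚ) ^ m * B x ((g ^ m) ((N ^ m) y)) := by
    intro m
    induction m with
    | zero => intro x y; simp
    | succ m ih =>
      intro x y
      have hNg : ∀ w, N ((g ^ m) w) = (g ^ m) (N w) := hNgm m
      have e1 : (N ^ (m + 1)) x = (N ^ m) (N x) := by
        rw [pow_succ, Module.End.mul_apply]
      have e2 : g (N ((g ^ m) ((N ^ m) y))) = (g ^ (m + 1)) ((N ^ (m + 1)) y) := by
        rw [hNg]
        rw [pow_succ' g m, pow_succ' N m, Module.End.mul_apply, Module.End.mul_apply]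
      rw [e1, ih (N x) y, key, e2]
      ring
  -- N is zero
  have hN0 : N = 0 := by
    by_contra hne
    obtain ⟨n, hn⟩ := hunip
    have hex : ∃ n, N ^ n = 0 := ⟨n, hn⟩
    set k := Nat.find hex with hk
    have hks : N ^ k = 0 := Nat.find_spec hex
    have hk0 : k ≠ 0 := by
      intro h
      apply hne
      have : (N : Module.End ℚ V) ^ 0 = 0 := h ▸ hks
      simpa using congrArg (fun M => N * M) this
    have hk1 : k ≠ 1 := by
      intro h
      exact hne (by simpa [h] using hks)
    have hk2 : 2 ≤ k := by omega
    have hkm : N ^ (k - 1) ≠ 0 := Nat.find_min hex (by omega)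
    obtain ⟨x, hx⟩ : ∃ x, (N ^ (k - 1)) x ≠ 0 := by
      by_contra h
      push_neg at h
      exact hkm (LinearMap.ext fun x => by simpa using h x)
    set v := (N ^ (k - 1)) x with hv
    have hvker : N v = 0 := by
      have : N ((N ^ (k - 1)) x) = (N ^ k) x := by
        rw [← Module.End.mul_apply, ← pow_succ']
        congr 2
        omega
      rw [hv, this, hks]
      rfl
    have hBvv : B v v = 0 := by
      have := keym (k - 1) x v
      have hzero : (N ^ (k - 1)) v = 0 := by
        rw [hv, ← Module.End.mul_apply, ← pow_add]
        have : k - 1 + (k - 1) = (k - 2) + k := by omega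
        rw [this, pow_add, hks, mul_zero]
        rfl
      rw [hv] at this ⊢
      rw [hzero] at this
      simpa using this
    have hvmem : v ∈ LinearMap.ker ((U : V →ₗ[ℚ] V) - LinearMap.id : Module.End ℚ V) := by
      simpa [LinearMap.mem_ker, ← hNdef, ← hf] using hvker
    rcases hdef with hpos | hneg
    · have := hpos v hvmem hx
      rw [hBvv] at this; exact lt_irrefl 0 this
    · have := hneg v hvmem hx
      rw [hBvv] at this; exact lt_irrefl 0 this
  ext v
  have : N v = 0 := by rw [hN0]; rfl
  have : f v = v := by rw [hNv] at this; linear_combination (norm := module) this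
  simpa [hf] using this
end

section
/- Let L be a unimodular lattice and e ∈ L a primitive isotropic vector. An isometry g of L satisfies g(e) = e and induces the identity on e^⊥/ℤe if and only if g = E(e,c̃) for some c̃ ∈ e^⊥ with c̃² even. Moreover E(e,c̃) = E(e,c̃') if and only if c̃ − c̃' ∈ ℤe; hence c̃ ↦ E(e,c̃) induces a group isomorphism from {c̃ ∈ e^⊥ : c̃² even}/ℤe onto the group of isometries of L that fix e and act trivially on e^⊥/ℤe. -/
/-- The Eichler transformation `E(e,c̃) : x ↦ x + (x·e)·c̃ − (x·c̃)·e − ½(c̃·c̃)(x·e)·e`. -/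
def eichler {L : Type*} [AddCommGroup L] [inst : Module ℤ L]
    (B : LinearMap.BilinForm ℤ L) (e c : L) : L →ₗ[ℤ] L :=
  haveI := @IsScalarTower.left ℤ L _ inst.toMulAction
  LinearMap.id + (B.flip e).smulRight c - (B.flip c).smulRight e
    - (B c c / 2) • (B.flip e).smulRight e

def IsPrimitiveVec {L : Type*} [AddCommGroup L] [Module ℤ L] (e : L) : Prop :=
  ∀ (n : ℤ) (x : L), e = n • x → n = 1 ∨ n = -1

section Aux

variable {L : Type*} [AddCommGroup L] [Module ℤ L] (B : LinearMap.BilinForm ℤ L)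

lemma eichler_apply (e c x : L) :
    eichler B e c x = x + (B x e) • c - (B x c) • e - (B c c / 2) • ((B x e) • e) := by
  simp only [eichler, LinearMap.sub_apply, LinearMap.add_apply, LinearMap.id_apply,
    LinearMap.smulRight_apply, LinearMap.smul_apply]
  have h1 : B.flip e x = B x e := rfl
  have h2 : B.flip c x = B x c := rfl
  rw [h1, h2]
  simp only [← int_smul_eq_zsmul ‹Module ℤ L›]
  exact congrArg _ (((show ∀ (k : ℤ) (F : L →ₗ[ℤ] L) (y : L), (@HSMul.hSMul ℤ _ _ (@instHSMul _ _ (@ZSMul.toSMul _ SubNegMonoid.toZSMul)) k F) y = @HSMul.hSMul ℤ L L (@instHSMul _ _ (@ZSMul.toSMul _ SubNegMonoid.toZSMul)) k (F y) from fun _ _ _ => rfl) _ _ _).trans (int_smul_eq_zsmul ‹Module ℤ L› _ _).symm)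

lemma B_smul_left (n : ℤ) (x y : L) : B (n • x) y = n * B x y := by rw [map_zsmul]; rfl

lemma B_smul_right (n : ℤ) (x y : L) : B x (n • y) = n * B x y := by rw [map_zsmul]; rfl

lemma B_sub_left (x y z : L) : B (x - y) z = B x z - B y z := by rw [map_sub]; rfl

lemma B_sub_right (x y z : L) : B x (y - z) = B x y - B x z := map_sub _ _ _

lemma B_add_left (x y z : L) : B (x + y) z = B x z + B y z := by rw [map_add]; rfl

lemma B_add_right (x y z : L) : B x (y + z) = B x y + B x z := map_add _ _ _

lemma exists_dual_one (hsymm : ∀ x y : L, B x y = B y x)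
    (hunimodular : Function.Bijective B)
    (e : L) (hprim : IsPrimitiveVec e) : ∃ f : L, B f e = 1 := by
  set S : Ideal ℤ := LinearMap.range (B.flip e) with hS
  haveI : S.IsPrincipal := IsPrincipalIdealRing.principal S
  set d : ℤ := Submodule.IsPrincipal.generator S with hd'
  have hdmem : d ∈ S := Submodule.IsPrincipal.generator_mem S
  obtain ⟨f₀, hf₀⟩ := hdmem
  have hf₀' : B f₀ e = d := hf₀
  have hdvd : ∀ x : L, d ∣ B x e := fun x =>
    (Submodule.IsPrincipal.mem_iff_generator_dvd S).mp ⟨x, rfl⟩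
  by_cases hd : d = 0
  · have h0 : ∀ x, B x e = 0 := fun x => zero_dvd_iff.mp (hd ▸ hdvd x)
    have he0 : e = 0 := by
      apply hunimodular.injective
      ext x
      simp [hsymm e x, h0 x]
    rcases hprim 0 0 (by simp [he0]) with h | h <;> norm_num at h
  · set F : L →ₗ[ℤ] ℤ :=
      { toFun := fun x => B x e / d
        map_add' := fun x y => by
          show B (x + y) e / d = B x e / d + B y e / d
          obtain ⟨a, ha⟩ := hdvd x; obtain ⟨b, hb⟩ := hdvd y
          have hxy : B (x + y) e = d * (a + b) := by
            rw [B_add_left, ha, hb]; ring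
          rw [hxy, ha, hb, Int.mul_ediv_cancel_left _ hd, Int.mul_ediv_cancel_left _ hd,
            Int.mul_ediv_cancel_left _ hd]
        map_smul' := fun n x => by
          obtain ⟨a, ha⟩ := hdvd x
          rw [LinearMap.map_smul₂, smul_eq_mul, ha]
          simp only [RingHom.id_apply, smul_eq_mul]
          have h2 : n * (d * a) = d * (n * a) := by ring
          rw [h2, Int.mul_ediv_cancel_left _ hd, Int.mul_ediv_cancel_left _ hd] } with hF
    obtain ⟨y, hy⟩ := hunimodular.surjective F
    have hyx : ∀ x, B x y = B x e / d := fun x => (hsymm x y).trans (by rw [hy]; rfl)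
    have hedy : e = d • y := by
      apply hunimodular.injective
      ext x
      calc B e x = B x e := hsymm e x
        _ = d * (B x e / d) := (Int.mul_ediv_cancel' (hdvd x)).symm
        _ = d * B x y := by rw [hyx x]
        _ = B x (d • y) := (B_smul_right B d x y).symm
        _ = B (d • y) x := hsymm x _
    rcases hprim d y hedy with h1 | h1 <;>
      exact ⟨d • f₀, by rw [B_smul_left, hf₀', h1]; norm_num⟩

end Aux

/-- In a unimodular lattice `L` with `e` primitive isotropic, an isometry
`g` fixes `e` and acts trivially on `e^⊥/ℤe` iff it is an Eichler transformation
`E(e,c̃)` with `c̃ ∈ e^⊥` of even square; moreover `E(e,c̃) = E(e,c̃')` iff `c̃ − c̃' ∈ ℤe`,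
so `c̃ ↦ E(e,c̃)` induces a group isomorphism from `{c̃ ∈ e^⊥ : c̃² even}/ℤe` onto the
group of isometries of `L` fixing `e` and acting trivially on `e^⊥/ℤe`. -/
theorem eichler_characterization
    (L : Type*) [AddCommGroup L] [Module ℤ L] [Module.Free ℤ L] [Module.Finite ℤ L]
    (B : LinearMap.BilinForm ℤ L)
    (hsymm : ∀ x y : L, B x y = B y x)
    (hunimodular : Function.Bijective B)
    (e : L) (hprim : IsPrimitiveVec e) (hiso : B e e = 0) :
    (∀ g : L ≃ₗ[ℤ] L, (∀ x y : L, B (g x) (g y) = B x y) →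
      ((g e = e ∧ ∀ x : L, B x e = 0 → ∃ n : ℤ, g x = x + n • e) ↔
        (∃ c : L, B c e = 0 ∧ Even (B c c) ∧ ∀ x : L, g x = eichler B e c x))) ∧
    (∀ c c' : L, B c e = 0 → B c' e = 0 → Even (B c c) → Even (B c' c') →
      (eichler B e c = eichler B e c' ↔ ∃ n : ℤ, c - c' = n • e)) := by
  obtain ⟨f, hf⟩ := exists_dual_one B hsymm hunimodular e hprim
  constructor
  · intro g hg
    constructor
    · -- forward: fixes e and trivial on e^⊥/ℤe → Eichler
      rintro ⟨hge, htriv⟩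
      have hgfe : B (g f) e = B f e := by have h := hg f e; rwa [hge] at h
      set c : L := g f - f with hc
      have hgf : g f = f + c := by rw [hc]; abel
      have hce : B c e = 0 := by
        rw [hc, B_sub_left, hgfe]; ring
      have hgfgf : B (g f) (g f) = B f f := hg f f
      have hsymf : B (g f) f = B f (g f) := hsymm _ _
      have hcc2 : B c c = 2 * (B f f - B f (g f)) := by
        have h1 : B c c = B (g f) (g f) - B f (g f) - (B (g f) f - B f f) := by
          rw [hc, B_sub_left, B_sub_right, B_sub_right]; ring
        omega
      have heven : Even (B c c) := ⟨B f f - B f (g f), by omega⟩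
      have hBegf : B e (g f) = 1 := by
        have h := hg e f
        rw [hge] at h
        rw [h, hsymm e f, hf]
      have key : B f c = -(B c c / 2) := by
        have h1 : B f c = B f (g f) - B f f := by rw [hc, B_sub_right]
        have h2 : B c c / 2 = B f f - B f (g f) := by omega
        omega
      refine ⟨c, hce, heven, fun x => ?_⟩
      obtain ⟨n, hn⟩ := htriv (x - B x e • f) (by
        rw [B_sub_left, B_smul_left, hf]; ring)
      have hx : x = B x e • f + (x - B x e • f) := by abel
      have hgx : g x = B x e • g f + ((x - B x e • f) + n • e) := by
        conv_lhs => rw [hx]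
        rw [map_add, map_zsmul, hn]
      have hn' : n = -(B (x - B x e • f) c) := by
        have h3 := hg (x - B x e • f) f
        rw [hn] at h3
        have h4 : B ((x - B x e • f) + n • e) (g f)
            = B (x - B x e • f) (g f) + n * B e (g f) := by
          rw [B_add_left, B_smul_left]
        have h5 : B (x - B x e • f) c = B (x - B x e • f) (g f) - B (x - B x e • f) f := by
          rw [hc, B_sub_right]
        rw [hBegf] at h4
        omega
      have hbxc : B x c = B x e * B f c + B (x - B x e • f) c := by
        conv_lhs => rw [hx]
        rw [B_add_left, B_smul_left]
      rw [eichler_apply, hgx, hgf, hn', hbxc, key]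
      have hco : B x e * -(B c c / 2) + B (x - B x e • f) c
          = B (x - B x e • f) c - (B c c / 2) * (B x e) := by ring
      rw [hco, zsmul_add, sub_zsmul, neg_zsmul, ← mul_zsmul]
      abel
    · -- backward: Eichler → fixes e and trivial
      rintro ⟨c, hce, _, hgc⟩
      have hec : B e c = 0 := (hsymm e c).trans hce
      constructor
      · rw [hgc e, eichler_apply, hiso, hec, zero_zsmul, zero_zsmul]
        simp [zsmul_zero]
      · intro x hxe
        refine ⟨-(B x c), ?_⟩
        rw [hgc x, eichler_apply, hxe, zero_zsmul, zero_zsmul, zsmul_zero, neg_zsmul]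
        abel
  · intro c c' hce hc'e _ _
    constructor
    · intro h
      have h1 := LinearMap.congr_fun h f
      rw [eichler_apply, eichler_apply, hf] at h1
      simp only [one_zsmul] at h1
      refine ⟨(B f c + B c c / 2) - (B f c' + B c' c' / 2), ?_⟩
      have h4 := sub_eq_zero.mpr h1
      have h5 : (f + c - (B f c) • e - (B c c / 2) • e)
            - (f + c' - (B f c') • e - (B c' c' / 2) • e)
          = (c - c') - (((B f c + B c c / 2) - (B f c' + B c' c' / 2)) • e) := by
        rw [sub_zsmul, add_zsmul, add_zsmul]
        abel
      rw [h5] at h4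
      exact sub_eq_zero.mp h4
    · rintro ⟨n, hn⟩
      have hc : c = c' + n • e := by rw [← hn]; abel
      have hBcc : B c c = B c' c' := by
        rw [hc, B_add_left, B_add_right, B_add_right, B_smul_left, B_smul_right,
          B_smul_left, B_smul_right, hiso, hc'e, hsymm e c', hc'e]
        ring
      ext x
      rw [eichler_apply, eichler_apply, hBcc]
      have hBxc : B x c = B x c' + n * B x e := by
        rw [hc, B_add_right, B_smul_right]
      rw [hBxc, hc, zsmul_add, add_zsmul, ← mul_zsmul, mul_comm ((B x) e) n]
      abel
end

section
/- For every d ≥ 1, the lattice d·E8(−1) ⊥ (2d−2)·U, the orthogonal direct sum of d copies of E8(−1) and 2d−2 copies of U, admits a ℤ-basis consisting entirely of (−2)-vectors. -/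
/-- The Cartan matrix of `E8` (nodes `0–1–2–3–4–5–6` a chain, node `7` attached to
node `2`, so the three legs at the branch node have lengths `1`, `2`, `4`). -/
def E8Cartan : Matrix (Fin 8) (Fin 8) ℤ :=
  !![ 2, -1,  0,  0,  0,  0,  0,  0;
     -1,  2, -1,  0,  0,  0,  0,  0;
      0, -1,  2, -1,  0,  0,  0, -1;
      0,  0, -1,  2, -1,  0,  0,  0;
      0,  0,  0, -1,  2, -1,  0,  0;
      0,  0,  0,  0, -1,  2, -1,  0;
      0,  0,  0,  0,  0, -1,  2,  0;
      0,  0, -1,  0,  0,  0,  0,  2]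

/-- The underlying `ℤ`-module of the orthogonal direct sum of `d` copies of `E8(−1)`
and `2d−2` copies of the hyperbolic plane `U`. -/
abbrev LatticeDE8U (d : ℕ) : Type := (Fin d → Fin 8 → ℤ) × (Fin (2 * d - 2) → ℤ × ℤ)

/-- The bilinear form of `d·E8(−1) ⊥ (2d−2)·U`. -/
def formDE8U (d : ℕ) (x y : LatticeDE8U d) : ℤ :=
  (∑ k, ∑ i, ∑ j, x.1 k i * (-(E8Cartan i j)) * y.1 k j)
    + ∑ k, ((x.2 k).1 * (y.2 k).2 + (x.2 k).2 * (y.2 k).1)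

section Aux

/-- the special `(−2)`-vector in the first `E8` summand -/
def e00 (d : ℕ) (hd : 1 ≤ d) : Fin d → Fin 8 → ℤ :=
  Pi.single (⟨0, hd⟩ : Fin d) (Pi.single (0 : Fin 8) 1)

/-- the shear sending the standard basis to a basis of `(−2)`-vectors -/
def shear (d : ℕ) (hd : 1 ≤ d) : LatticeDE8U d ≃ₗ[ℤ] LatticeDE8U d where
  toFun p := (p.1 + (∑ k, (p.2 k).2) • e00 d hd, fun k => ((p.2 k).1 + (p.2 k).2, -(p.2 k).1))
  invFun p := (p.1 - (∑ k, ((p.2 k).1 + (p.2 k).2)) • e00 d hd,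
    fun k => (-(p.2 k).2, (p.2 k).1 + (p.2 k).2))
  map_add' p q := by
    ext <;> simp [Finset.sum_add_distrib, add_smul] <;> ring
  map_smul' c p := by
    ext <;> simp [← Finset.mul_sum, mul_smul] <;> ring
  left_inv p := by
    ext <;> simp
  right_inv p := by
    ext <;> simp

lemma sum_single_E8 {n : ℕ} (k : Fin n) (f : Fin 8 → ℤ) :
    (∑ k' : Fin n, ∑ i, ∑ j, (Pi.single k f : Fin n → Fin 8 → ℤ) k' i * (-(E8Cartan i j)) *
      (Pi.single k f : Fin n → Fin 8 → ℤ) k' j)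
      = ∑ i, ∑ j, f i * (-(E8Cartan i j)) * f j := by
  rw [Finset.sum_eq_single k]
  · simp
  · intro b _ hb; simp [Pi.single_eq_of_ne hb]
  · simp

lemma sum_single_U {n : ℕ} (k : Fin n) (v : ℤ × ℤ) :
    (∑ k' : Fin n, (((Pi.single k v : Fin n → ℤ × ℤ) k').1 * ((Pi.single k v : Fin n → ℤ × ℤ) k').2
        + ((Pi.single k v : Fin n → ℤ × ℤ) k').2 * ((Pi.single k v : Fin n → ℤ × ℤ) k').1))
      = v.1 * v.2 + v.2 * v.1 := by
  rw [Finset.sum_eq_single k]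
  · simp
  · intro b _ hb; simp [Pi.single_eq_of_ne hb]
  · simp

lemma E8_diag (i : Fin 8) :
    (∑ i' : Fin 8, ∑ j, (Pi.single i 1 : Fin 8 → ℤ) i' * (-(E8Cartan i' j)) *
      (Pi.single i 1 : Fin 8 → ℤ) j) = -2 := by
  fin_cases i <;> decide

lemma form_E8 (d : ℕ) (k : Fin d) (i : Fin 8) :
    formDE8U d (Pi.single k (Pi.single i 1), 0) (Pi.single k (Pi.single i 1), 0) = -2 := by
  show (∑ k', ∑ i', ∑ j, _) + _ = -2
  rw [sum_single_E8, E8_diag]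
  simp

lemma form_u (d : ℕ) (k : Fin (2 * d - 2)) :
    formDE8U d (0, Pi.single k ((1 : ℤ), (-1 : ℤ))) (0, Pi.single k (1, -1)) = -2 := by
  show _ + ∑ k', _ = -2
  rw [sum_single_U]
  simp

lemma form_w (d : ℕ) (hd : 1 ≤ d) (k : Fin (2 * d - 2)) :
    formDE8U d (e00 d hd, Pi.single k ((1 : ℤ), (0 : ℤ)))
      (e00 d hd, Pi.single k (1, 0)) = -2 := by
  show (∑ k', ∑ i', ∑ j, _) + ∑ k', _ = -2
  rw [e00, sum_single_E8, sum_single_U, E8_diag]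
  simp

end Aux

/-- For every `d ≥ 1`, the lattice `d·E8(−1) ⊥ (2d−2)·U` admits a
`ℤ`-basis consisting entirely of `(−2)`-vectors. -/
theorem dE8U_basis_of_minus_two_vectors (d : ℕ) (hd : 1 ≤ d) :
    ∃ b : Module.Basis (Fin (12 * d - 4)) ℤ (LatticeDE8U d),
      ∀ k, formDE8U d (b k) (b k) = -2 := by
  classical
  set ι := ((Σ _ : Fin d, Fin 8) ⊕ (Σ _ : Fin (2 * d - 2), Fin 2)) with hι
  have hcard : Fintype.card ι = 12 * d - 4 := by
    simp [hι]
    omega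
  let std : Module.Basis ι ℤ (LatticeDE8U d) :=
    (Pi.basis fun _ => Pi.basisFun ℤ (Fin 8)).prod (Pi.basis fun _ => Module.Basis.finTwoProd ℤ)
  let e : ι ≃ Fin (12 * d - 4) := Fintype.equivFinOfCardEq hcard
  refine ⟨((std.map (shear d hd)).reindex e), fun k => ?_⟩
  rw [Module.Basis.reindex_apply, Module.Basis.map_apply]
  generalize e.symm k = i
  obtain ⟨k', i'⟩ | ⟨k', i'⟩ := i
  · have h : std (Sum.inl ⟨k', i'⟩) = (Pi.single k' (Pi.single i' 1), 0) := by
      apply Prod.ext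
      · rw [Module.Basis.prod_apply_inl_fst, Pi.basis_apply]
        simp
      · rw [Module.Basis.prod_apply_inl_snd]
    rw [h]
    have h2 : shear d hd (Pi.single k' (Pi.single i' 1), 0) =
        (Pi.single k' (Pi.single i' 1), 0) := by
      refine Prod.ext ?_ ?_
      · funext a b; simp [shear]
      · funext a; simp [shear]
    rw [h2]
    exact form_E8 d k' i'
  · fin_cases i'
    · show formDE8U d ((shear d hd) (std (Sum.inr ⟨k', 0⟩)))
        ((shear d hd) (std (Sum.inr ⟨k', 0⟩))) = -2
      have h : std (Sum.inr ⟨k', 0⟩) = (0, Pi.single k' ((1 : ℤ), (0 : ℤ))) := by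
        apply Prod.ext
        · rw [Module.Basis.prod_apply_inr_fst]
        · rw [Module.Basis.prod_apply_inr_snd, Pi.basis_apply]
          simp [Module.Basis.finTwoProd_zero]
      rw [h]
      have h2 : shear d hd (0, Pi.single k' ((1 : ℤ), (0 : ℤ))) =
          (0, Pi.single k' ((1 : ℤ), (-1 : ℤ))) := by
        refine Prod.ext ?_ ?_
        · funext a b
          simp [shear, Pi.single_apply, apply_ite]
        · funext j
          rcases eq_or_ne j k' with rfl | hj
          · simp [shear]
          · simp [shear, Pi.single_eq_of_ne hj]
      rw [h2]
      exact form_u d k'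
    · show formDE8U d ((shear d hd) (std (Sum.inr ⟨k', 1⟩)))
        ((shear d hd) (std (Sum.inr ⟨k', 1⟩))) = -2
      have h : std (Sum.inr ⟨k', 1⟩) = (0, Pi.single k' ((0 : ℤ), (1 : ℤ))) := by
        apply Prod.ext
        · rw [Module.Basis.prod_apply_inr_fst]
        · rw [Module.Basis.prod_apply_inr_snd, Pi.basis_apply]
          simp [Module.Basis.finTwoProd_one]
      rw [h]
      have h2 : shear d hd (0, Pi.single k' ((0 : ℤ), (1 : ℤ))) =
          (e00 d hd, Pi.single k' ((1 : ℤ), (0 : ℤ))) := by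
        refine Prod.ext ?_ ?_
        · funext a b
          simp [shear, Pi.single_apply, apply_ite, Finset.sum_ite_eq']
        · funext j
          rcases eq_or_ne j k' with rfl | hj
          · simp [shear]
          · simp [shear, Pi.single_eq_of_ne hj]
      rw [h2]
      exact form_w d hd k'
end
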